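/- Fix α with 0 < α < π. For ε ∈ (0,1), let I(ε) = ∫∫_{[ε,1]×[ε,1]} dt ds/(t² + s² − 2ts·cos α). Then the limit as ε → 0⁺ of I(ε)/ln(1/ε) exists and equals (π − α)/sin α. -/

import Mathlib

open Real Filter Set

lemma denom_eq (α t s : ℝ) :
    t ^ 2 + s ^ 2 - 2 * t * s * Real.cos α
      = (s - t * Real.cos α) ^ 2 + (t * Real.sin α) ^ 2 := by
  nlinarith [Real.sin_sq_add_cos_sq α]

lemma integ_arctan (b r : ℝ) (hr : 0 < r) (p q : ℝ) :
    ∫ s in p..q, 1 / ((s - b) ^ 2 + r ^ 2) =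
      r⁻¹ * Real.arctan ((q - b) / r) - r⁻¹ * Real.arctan ((p - b) / r) := by
  have hder : ∀ s : ℝ, HasDerivAt (fun u => r⁻¹ * Real.arctan ((u - b) / r))
      (1 / ((s - b) ^ 2 + r ^ 2)) s := by
    intro s
    have h1 : HasDerivAt (fun u : ℝ => (u - b) / r) (1 / r) s := by
      simpa using ((hasDerivAt_id s).sub_const b).div_const r
    have h3 := ((Real.hasDerivAt_arctan ((s - b) / r)).comp s h1).const_mul r⁻¹
    refine h3.congr_deriv ?_
    have hden : ((s - b) ^ 2 + r ^ 2) ≠ 0 := by positivity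
    have h1r : (1 : ℝ) + ((s - b) / r) ^ 2 ≠ 0 := by positivity
    field_simp
    ring
  have hcont : Continuous fun s : ℝ => 1 / ((s - b) ^ 2 + r ^ 2) := by
    apply continuous_const.div
    · continuity
    · intro s; positivity
  rw [intervalIntegral.integral_eq_sub_of_hasDerivAt (fun s _ => hder s)
      (hcont.intervalIntegrable p q)]

lemma arctan_le_self' {x : ℝ} (hx : 0 ≤ x) : Real.arctan x ≤ x := by
  have h := integ_arctan 0 1 one_pos 0 x
  simp only [sub_zero, div_one, one_pow, inv_one, one_mul, Real.arctan_zero, sub_zero] at h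
  rw [← h]
  calc (∫ s in (0:ℝ)..x, 1 / (s ^ 2 + 1)) ≤ ∫ _ in (0:ℝ)..x, (1:ℝ) := by
        apply intervalIntegral.integral_mono_on hx
        · exact (Continuous.intervalIntegrable (by
            apply continuous_const.div
            · continuity
            · intro s; positivity) _ _)
        · exact intervalIntegrable_const
        · intro s _
          rw [div_le_one (by positivity)]
          nlinarith [sq_nonneg s]
    _ = x := by simp




noncomputable def gfun (α ε t : ℝ) : ℝ :=
  (t * Real.sin α)⁻¹ * Real.arctan ((1 - t * Real.cos α) / (t * Real.sin α)) -
  (t * Real.sin α)⁻¹ * Real.arctan ((ε - t * Real.cos α) / (t * Real.sin α))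

lemma arctan_cot (α : ℝ) (h0 : 0 < α) (h1 : α < π) :
    Real.arctan (Real.cos α / Real.sin α) = π / 2 - α := by
  have : Real.cos α / Real.sin α = Real.tan (π / 2 - α) := by
    rw [Real.tan_eq_sin_div_cos, Real.sin_pi_div_two_sub, Real.cos_pi_div_two_sub]
  rw [this, Real.arctan_tan (by linarith) (by linarith)]

lemma inner_eq (α : ℝ) (h0 : 0 < α) (h1 : α < π) {ε t : ℝ} (hε0 : 0 < ε)
    (ht : t ∈ Set.Icc ε 1) :
    (∫ s in ε..1, 1 / (t ^ 2 + s ^ 2 - 2 * t * s * Real.cos α)) = gfun α ε t := by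
  have hs : 0 < Real.sin α := Real.sin_pos_of_pos_of_lt_pi h0 h1
  have ht0 : 0 < t := lt_of_lt_of_le hε0 ht.1
  have hr : 0 < t * Real.sin α := mul_pos ht0 hs
  have : (∫ s in ε..1, 1 / (t ^ 2 + s ^ 2 - 2 * t * s * Real.cos α))
      = ∫ s in ε..1, 1 / ((s - t * Real.cos α) ^ 2 + (t * Real.sin α) ^ 2) := by
    congr 1; ext s; rw [denom_eq]
  rw [this, integ_arctan (t * Real.cos α) (t * Real.sin α) hr ε 1, gfun]

lemma arctan_zero_pt (α : ℝ) (h0 : 0 < α) (h1 : α < π) {t : ℝ} (ht0 : 0 < t) :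
    Real.arctan ((0 - t * Real.cos α) / (t * Real.sin α)) = α - π / 2 := by
  have hs : 0 < Real.sin α := Real.sin_pos_of_pos_of_lt_pi h0 h1
  have : (0 - t * Real.cos α) / (t * Real.sin α) = -(Real.cos α / Real.sin α) := by
    field_simp
    ring
  rw [this, Real.arctan_neg, arctan_cot α h0 h1]; ring

lemma g_upper (α : ℝ) (h0 : 0 < α) (h1 : α < π) {ε t : ℝ} (hε0 : 0 < ε)
    (ht : t ∈ Set.Icc ε 1) :
    gfun α ε t ≤ (π - α) / Real.sin α * (1 / t) := by
  have hs : 0 < Real.sin α := Real.sin_pos_of_pos_of_lt_pi h0 h1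
  have ht0 : 0 < t := lt_of_lt_of_le hε0 ht.1
  have hr : 0 < t * Real.sin α := mul_pos ht0 hs
  have hrinv : (0:ℝ) ≤ (t * Real.sin α)⁻¹ := by positivity
  have h3 : Real.arctan ((1 - t * Real.cos α) / (t * Real.sin α)) ≤ π / 2 :=
    (Real.arctan_lt_pi_div_two _).le
  have h2 : α - π / 2 ≤ Real.arctan ((ε - t * Real.cos α) / (t * Real.sin α)) := by
    rw [← arctan_zero_pt α h0 h1 ht0]
    apply Real.arctan_strictMono.monotone
    gcongr
  have heq : (t * Real.sin α)⁻¹ * (π - α) = (π - α) / Real.sin α * (1 / t) := by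
    rw [mul_inv]; ring
  have u1 := mul_le_mul_of_nonneg_left h3 hrinv
  have u2 := mul_le_mul_of_nonneg_left h2 hrinv
  have hsum : (t * Real.sin α)⁻¹ * (π / 2) - (t * Real.sin α)⁻¹ * (α - π / 2)
      = (t * Real.sin α)⁻¹ * (π - α) := by ring
  simp only [gfun]
  linarith [u1, u2]

lemma g_lower (α : ℝ) (h0 : 0 < α) (h1 : α < π) {ε t : ℝ} (hε0 : 0 < ε) (hε1 : ε < 1)
    (ht : t ∈ Set.Icc ε 1) :
    (π - α) / Real.sin α * (1 / t) - 2 / (1 - Real.cos α)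
      - 2 * ε / (1 - Real.cos α) * (t ^ 2)⁻¹ ≤ gfun α ε t := by
  have hs : 0 < Real.sin α := Real.sin_pos_of_pos_of_lt_pi h0 h1
  have hcos1 : Real.cos α < 1 := by
    nlinarith [Real.sin_sq_add_cos_sq α, Real.neg_one_le_cos α]
  have hcosm : -1 ≤ Real.cos α := Real.neg_one_le_cos α
  have hD : 0 < 1 - Real.cos α := by linarith
  have ht0 : 0 < t := lt_of_lt_of_le hε0 ht.1
  have ht1 : t ≤ 1 := ht.2
  have hr : 0 < t * Real.sin α := mul_pos ht0 hs
  have hrinv : (0:ℝ) ≤ (t * Real.sin α)⁻¹ := by positivity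
  -- 1 - t cos α ≥ (1 - cos α)/2
  have hb : (1 - Real.cos α) / 2 ≤ 1 - t * Real.cos α := by
    nlinarith [mul_nonneg (sub_nonneg.2 ht1) (by linarith : (0:ℝ) ≤ 1 + Real.cos α),
      mul_nonneg ht0.le hD.le]
  have hbpos : 0 < 1 - t * Real.cos α := by linarith
  -- lower bound on arctan((1-b)/r)
  have hx : 0 < (1 - t * Real.cos α) / (t * Real.sin α) := div_pos hbpos hr
  have a1 : π / 2 - 2 * (t * Real.sin α) / (1 - Real.cos α) ≤
      Real.arctan ((1 - t * Real.cos α) / (t * Real.sin α)) := by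
    have e := Real.arctan_inv_of_pos hx
    have le1 := arctan_le_self' (le_of_lt (inv_pos.2 hx))
    have einv : ((1 - t * Real.cos α) / (t * Real.sin α))⁻¹
        = (t * Real.sin α) / (1 - t * Real.cos α) := by
      rw [inv_div]
    have le2 : ((1 - t * Real.cos α) / (t * Real.sin α))⁻¹
        ≤ 2 * (t * Real.sin α) / (1 - Real.cos α) := by
      rw [einv]
      have h' := div_le_div_of_nonneg_left hr.le (by positivity : (0:ℝ) < (1 - Real.cos α) / 2) hb
      calc (t * Real.sin α) / (1 - t * Real.cos α)
          ≤ (t * Real.sin α) / ((1 - Real.cos α) / 2) := h'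
        _ = 2 * (t * Real.sin α) / (1 - Real.cos α) := by
            rw [div_div_eq_mul_div]; ring
    linarith [e, le1, le2]
  -- upper bound on arctan((ε-b)/r) via integral of tail
  have hint := integ_arctan (t * Real.cos α) (t * Real.sin α) hr 0 ε
  have hmono : (∫ s in (0:ℝ)..ε, 1 / ((s - t * Real.cos α) ^ 2 + (t * Real.sin α) ^ 2))
      ≤ ∫ _ in (0:ℝ)..ε, 2 / ((1 - Real.cos α) * t ^ 2) := by
    apply intervalIntegral.integral_mono_on hε0.le
    · exact (Continuous.intervalIntegrable (by
        apply continuous_const.div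
        · continuity
        · intro s; positivity) _ _)
    · exact intervalIntegrable_const
    · intro s hsm
      obtain ⟨hs0, hsε⟩ := hsm
      have hst : s ≤ t := le_trans hsε ht.1
      have hden : (1 - Real.cos α) * t ^ 2 / 2
          ≤ (s - t * Real.cos α) ^ 2 + (t * Real.sin α) ^ 2 := by
        rw [← denom_eq]
        nlinarith [mul_nonneg (by linarith : (0:ℝ) ≤ 1 + Real.cos α) (sq_nonneg (t - s)),
          mul_nonneg hD.le (mul_nonneg hs0 (by linarith : (0:ℝ) ≤ s + 2 * t))]
      calc 1 / ((s - t * Real.cos α) ^ 2 + (t * Real.sin α) ^ 2)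
          ≤ 1 / ((1 - Real.cos α) * t ^ 2 / 2) :=
            one_div_le_one_div_of_le (by positivity) hden
        _ = 2 / ((1 - Real.cos α) * t ^ 2) := by
            field_simp
  have hconst : (∫ _ in (0:ℝ)..ε, 2 / ((1 - Real.cos α) * t ^ 2))
      = ε * (2 / ((1 - Real.cos α) * t ^ 2)) := by
    simp [smul_eq_mul]; ring
  have haz := arctan_zero_pt α h0 h1 ht0
  have b2 : (t * Real.sin α)⁻¹ * Real.arctan ((ε - t * Real.cos α) / (t * Real.sin α))
      ≤ (t * Real.sin α)⁻¹ * (α - π / 2) + 2 * ε / ((1 - Real.cos α) * t ^ 2) := by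
    rw [hint, haz, hconst] at hmono
    have hee : ε * (2 / ((1 - Real.cos α) * t ^ 2)) = 2 * ε / ((1 - Real.cos α) * t ^ 2) := by
      ring
    linarith [hmono]
  have b1 : (t * Real.sin α)⁻¹ * (π / 2) - 2 / (1 - Real.cos α)
      ≤ (t * Real.sin α)⁻¹ * Real.arctan ((1 - t * Real.cos α) / (t * Real.sin α)) := by
    have := mul_le_mul_of_nonneg_left a1 hrinv
    have e2 : (t * Real.sin α)⁻¹ * (2 * (t * Real.sin α) / (1 - Real.cos α))
        = 2 / (1 - Real.cos α) := by
      field_simp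
    have hdist : (t * Real.sin α)⁻¹ * (π / 2 - 2 * (t * Real.sin α) / (1 - Real.cos α))
        = (t * Real.sin α)⁻¹ * (π / 2)
          - (t * Real.sin α)⁻¹ * (2 * (t * Real.sin α) / (1 - Real.cos α)) := by ring
    linarith [this]
  have heq : (t * Real.sin α)⁻¹ * (π - α) = (π - α) / Real.sin α * (1 / t) := by
    rw [mul_inv]; ring
  have heq2 : 2 * ε / ((1 - Real.cos α) * t ^ 2)
      = 2 * ε / (1 - Real.cos α) * (t ^ 2)⁻¹ := by
    have hD' : (1 - Real.cos α) ≠ 0 := hD.ne'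
    have ht' : t ≠ 0 := ht0.ne'
    field_simp
  have hsum : (t * Real.sin α)⁻¹ * (π / 2) - (t * Real.sin α)⁻¹ * (α - π / 2)
      = (t * Real.sin α)⁻¹ * (π - α) := by ring
  simp only [gfun]
  linarith [b1, b2]





lemma g_contOn (α : ℝ) (h0 : 0 < α) (h1 : α < π) {ε : ℝ} (hε0 : 0 < ε) :
    ContinuousOn (gfun α ε) (Set.Icc ε 1) := by
  have hs : 0 < Real.sin α := Real.sin_pos_of_pos_of_lt_pi h0 h1
  have hne : ∀ t ∈ Set.Icc ε 1, t * Real.sin α ≠ 0 := fun t ht =>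
    (mul_pos (lt_of_lt_of_le hε0 ht.1) hs).ne'
  have hlin : ContinuousOn (fun t : ℝ => t * Real.sin α) (Set.Icc ε 1) :=
    (continuous_id.mul continuous_const).continuousOn
  have hA : ContinuousOn (fun t : ℝ => (t * Real.sin α)⁻¹) (Set.Icc ε 1) :=
    hlin.inv₀ hne
  have hB : ∀ cst : ℝ, ContinuousOn
      (fun t : ℝ => Real.arctan ((cst - t * Real.cos α) / (t * Real.sin α)))
      (Set.Icc ε 1) := by
    intro cst
    apply Real.continuous_arctan.comp_continuousOn
    exact (continuousOn_const.sub (continuous_id.mul continuous_const).continuousOn).div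
      hlin hne
  exact (hA.mul (hB 1)).sub (hA.mul (hB ε))

lemma key (α : ℝ) (h0 : 0 < α) (h1 : α < π) {ε : ℝ} (hε0 : 0 < ε) (hε1 : ε < 1) :
    (π - α) / Real.sin α * Real.log (1 / ε) - 4 / (1 - Real.cos α) ≤
        (∫ t in ε..1, ∫ s in ε..1, 1 / (t ^ 2 + s ^ 2 - 2 * t * s * Real.cos α)) ∧
      (∫ t in ε..1, ∫ s in ε..1, 1 / (t ^ 2 + s ^ 2 - 2 * t * s * Real.cos α)) ≤
        (π - α) / Real.sin α * Real.log (1 / ε) := by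
  have hs : 0 < Real.sin α := Real.sin_pos_of_pos_of_lt_pi h0 h1
  have hcos1 : Real.cos α < 1 := by
    nlinarith [Real.sin_sq_add_cos_sq α, Real.neg_one_le_cos α]
  have hD : 0 < 1 - Real.cos α := by linarith
  have huIcc : Set.uIcc ε 1 = Set.Icc ε 1 := Set.uIcc_of_le hε1.le
  have hIeq : (∫ t in ε..1, ∫ s in ε..1, 1 / (t ^ 2 + s ^ 2 - 2 * t * s * Real.cos α))
      = ∫ t in ε..1, gfun α ε t := by
    apply intervalIntegral.integral_congr
    rw [huIcc]
    intro t ht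
    exact inner_eq α h0 h1 hε0 ht
  have hgInt : IntervalIntegrable (gfun α ε) MeasureTheory.volume ε 1 := by
    apply ContinuousOn.intervalIntegrable
    rw [huIcc]; exact g_contOn α h0 h1 hε0
  have hne0 : ∀ t ∈ Set.Icc ε 1, t ≠ 0 := fun t ht => (lt_of_lt_of_le hε0 ht.1).ne'
  have hContUp : ContinuousOn (fun t : ℝ => (π - α) / Real.sin α * (1 / t)) (Set.Icc ε 1) :=
    continuousOn_const.mul (continuousOn_const.div continuousOn_id hne0)
  have hupInt : IntervalIntegrable (fun t : ℝ => (π - α) / Real.sin α * (1 / t))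
      MeasureTheory.volume ε 1 := by
    apply ContinuousOn.intervalIntegrable; rw [huIcc]; exact hContUp
  have hsqCont : ContinuousOn (fun t : ℝ => (t ^ 2)⁻¹) (Set.Icc ε 1) :=
    (continuous_pow 2).continuousOn.inv₀ (fun t ht => pow_ne_zero 2 (hne0 t ht))
  have hf3Int : IntervalIntegrable (fun t : ℝ => 2 * ε / (1 - Real.cos α) * (t ^ 2)⁻¹)
      MeasureTheory.volume ε 1 := by
    apply ContinuousOn.intervalIntegrable; rw [huIcc]
    exact continuousOn_const.mul hsqCont
  have hlowInt : IntervalIntegrable (fun t : ℝ => (π - α) / Real.sin α * (1 / t)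
      - 2 / (1 - Real.cos α) - 2 * ε / (1 - Real.cos α) * (t ^ 2)⁻¹)
      MeasureTheory.volume ε 1 :=
    (hupInt.sub intervalIntegrable_const).sub hf3Int
  have hzero_notin : (0:ℝ) ∉ Set.uIcc ε 1 := by
    rw [huIcc]; rintro ⟨ha, -⟩; linarith
  have hlogint : (∫ t in ε..1, (π - α) / Real.sin α * (1 / t))
      = (π - α) / Real.sin α * Real.log (1 / ε) := by
    rw [intervalIntegral.integral_const_mul, integral_one_div hzero_notin]
  have hsq : (∫ t in ε..1, (t ^ 2)⁻¹) = ε⁻¹ - 1 := by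
    have hderiv : ∀ t ∈ Set.uIcc ε 1, HasDerivAt (fun u : ℝ => -u⁻¹) ((t ^ 2)⁻¹) t := by
      intro t ht
      rw [huIcc] at ht
      have := (hasDerivAt_inv (hne0 t ht)).neg
      simp only [neg_neg] at this
      exact this
    rw [intervalIntegral.integral_eq_sub_of_hasDerivAt hderiv
      (by apply ContinuousOn.intervalIntegrable; rw [huIcc]; exact hsqCont)]
    norm_num
    ring
  constructor
  · -- lower bound
    rw [hIeq]
    have hmono := intervalIntegral.integral_mono_on hε1.le hlowInt hgInt
      (fun t ht => g_lower α h0 h1 hε0 hε1 ht)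
    have hval : (∫ t in ε..1, ((π - α) / Real.sin α * (1 / t)
        - 2 / (1 - Real.cos α) - 2 * ε / (1 - Real.cos α) * (t ^ 2)⁻¹))
        = (π - α) / Real.sin α * Real.log (1 / ε)
          - (1 - ε) * (2 / (1 - Real.cos α))
          - 2 * ε / (1 - Real.cos α) * (ε⁻¹ - 1) := by
      rw [intervalIntegral.integral_sub (hupInt.sub intervalIntegrable_const) hf3Int,
        intervalIntegral.integral_sub hupInt intervalIntegrable_const,
        hlogint, intervalIntegral.integral_const_mul, hsq,
        intervalIntegral.integral_const]
      simp [smul_eq_mul]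
    rw [hval] at hmono
    have h2D : (0:ℝ) ≤ 2 / (1 - Real.cos α) := by positivity
    have k1 : (1 - ε) * (2 / (1 - Real.cos α)) ≤ 2 / (1 - Real.cos α) := by nlinarith
    have k2 : 2 * ε / (1 - Real.cos α) * (ε⁻¹ - 1) ≤ 2 / (1 - Real.cos α) := by
      have he : 2 * ε / (1 - Real.cos α) * (ε⁻¹ - 1)
          = 2 / (1 - Real.cos α) - 2 * ε / (1 - Real.cos α) := by
        field_simp
      have hp : (0:ℝ) ≤ 2 * ε / (1 - Real.cos α) := by positivity
      linarith
    have h4 : 4 / (1 - Real.cos α) = 2 / (1 - Real.cos α) + 2 / (1 - Real.cos α) := by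
      ring
    linarith
  · -- upper bound
    rw [hIeq]
    have hmono := intervalIntegral.integral_mono_on hε1.le hgInt hupInt
      (fun t ht => g_upper α h0 h1 hε0 ht)
    rw [hlogint] at hmono
    exact hmono

theorem double_integral_log_asymptotics (α : ℝ) (h0 : 0 < α) (h1 : α < π) :
    Tendsto
      (fun ε : ℝ =>
        (∫ t in ε..1, ∫ s in ε..1, 1 / (t ^ 2 + s ^ 2 - 2 * t * s * Real.cos α)) /
          Real.log (1 / ε))
      (nhdsWithin 0 (Ioo 0 1)) (nhds ((π - α) / Real.sin α)) := by
  have hs : 0 < Real.sin α := Real.sin_pos_of_pos_of_lt_pi h0 h1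
  have hcos1 : Real.cos α < 1 := by
    nlinarith [Real.sin_sq_add_cos_sq α, Real.neg_one_le_cos α]
  have hD : 0 < 1 - Real.cos α := by linarith
  have hltop : Tendsto (fun ε : ℝ => Real.log (1 / ε)) (nhdsWithin 0 (Ioo (0:ℝ) 1)) atTop := by
    have h1' : Tendsto Real.log (nhdsWithin 0 (Set.Ioo (0:ℝ) 1)) atBot :=
      Real.tendsto_log_nhdsGT_zero.mono_left
        (nhdsWithin_mono _ Set.Ioo_subset_Ioi_self)
    have h2' := tendsto_neg_atBot_atTop.comp h1'
    refine h2'.congr fun ε => ?_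
    simp [one_div, Real.log_inv]
  have hlowt : Tendsto (fun ε : ℝ => (π - α) / Real.sin α
        - (4 / (1 - Real.cos α)) / Real.log (1 / ε))
      (nhdsWithin 0 (Ioo (0:ℝ) 1)) (nhds ((π - α) / Real.sin α)) := by
    have hz := (tendsto_const_nhds (x := (4:ℝ) / (1 - Real.cos α))
      (f := nhdsWithin (0:ℝ) (Ioo (0:ℝ) 1))).div_atTop hltop
    simpa using (tendsto_const_nhds (x := (π - α) / Real.sin α)
      (f := nhdsWithin (0:ℝ) (Ioo (0:ℝ) 1))).sub hz
  apply tendsto_of_tendsto_of_tendsto_of_le_of_le' hlowt tendsto_const_nhds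
  · filter_upwards [self_mem_nhdsWithin] with ε hε
    obtain ⟨hε0, hε1⟩ := hε
    have hlog : 0 < Real.log (1 / ε) := Real.log_pos ((one_lt_div hε0).mpr hε1)
    have hk := (key α h0 h1 hε0 hε1).1
    have h2 : ((π - α) / Real.sin α * Real.log (1 / ε) - 4 / (1 - Real.cos α))
        / Real.log (1 / ε)
        ≤ (∫ t in ε..1, ∫ s in ε..1, 1 / (t ^ 2 + s ^ 2 - 2 * t * s * Real.cos α))
          / Real.log (1 / ε) := by
      gcongr
    rw [sub_div, mul_div_cancel_right₀ _ hlog.ne'] at h2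
    exact h2
  · filter_upwards [self_mem_nhdsWithin] with ε hε
    obtain ⟨hε0, hε1⟩ := hε
    have hlog : 0 < Real.log (1 / ε) := Real.log_pos ((one_lt_div hε0).mpr hε1)
    have hk := (key α h0 h1 hε0 hε1).2
    rw [div_le_iff₀ hlog]
    linarith
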